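/- Let F, G : ℝ → [0,1] be right-continuous nondecreasing functions with F(x) < 1 and G(x) < 1 for all x (infinite right endpoints), and suppose lim_{x→∞} (1 − G(x))/(1 − F(x)) = 1. Let (a_n), (b_n) be real sequences with a_n > 0 and b_n → ∞ such that for every x ∈ ℝ, lim_n F(a_n x + b_n)^n = Λ(x), and assume a_n/b_n → 0. Then for every x ∈ ℝ, lim_n G(a_n x + b_n)^n = Λ(x). (Property 1: tail-equivalent distributions share the same norming constants for the Gumbel limit.) -/

import Mathlib

open Filter Set

private lemma lemA (c : ℕ → ℝ) (hc0 : ∀ n, 0 ≤ c n) (hc1 : ∀ n, c n < 1) (L : ℝ) (hL : 0 < L)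
    (h : Tendsto (fun n : ℕ => c n ^ n) atTop (nhds L)) :
    Tendsto (fun n : ℕ => (n : ℝ) * (1 - c n)) atTop (nhds (-Real.log L)) := by
  have hpos : ∀ᶠ n : ℕ in atTop, 0 < c n := by
    filter_upwards [h.eventually (eventually_gt_nhds (half_lt_self hL)), eventually_ge_atTop 1]
      with n hn hn1
    rcases (hc0 n).lt_or_eq with h' | h'
    · exact h'
    · exfalso; rw [← h', zero_pow (by omega)] at hn; linarith [half_pos hL]
  have hnl : Tendsto (fun n : ℕ => (n : ℝ) * Real.log (c n)) atTop (nhds (Real.log L)) := by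
    have h2 := (Real.continuousAt_log hL.ne').tendsto.comp h
    refine h2.congr (fun n => ?_)
    simp [Real.log_pow]
  have hl0 : Tendsto (fun n : ℕ => Real.log (c n)) atTop (nhds 0) := by
    have h1 : Tendsto (fun n : ℕ => ((n : ℝ) * Real.log (c n)) * (n : ℝ)⁻¹) atTop
        (nhds (Real.log L * 0)) := hnl.mul tendsto_inv_atTop_nhds_zero_nat
    rw [mul_zero] at h1
    refine h1.congr' ?_
    filter_upwards [eventually_ge_atTop 1] with n hn
    have : (n : ℝ) ≠ 0 := by positivity
    field_simp
  have hne : ∀ᶠ n : ℕ in atTop, Real.log (c n) ≠ 0 := by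
    filter_upwards [hpos] with n hn
    exact ne_of_lt (Real.log_neg hn (hc1 n))
  have hslope : Tendsto (fun n : ℕ => (Real.exp (Real.log (c n)) - 1) / Real.log (c n))
      atTop (nhds 1) := by
    have hd : Tendsto (slope Real.exp 0) (nhdsWithin 0 {(0 : ℝ)}ᶜ) (nhds 1) := by
      have h3 := (Real.hasDerivAt_exp 0)
      rw [hasDerivAt_iff_tendsto_slope] at h3
      simpa using h3
    have hmem : Tendsto (fun n : ℕ => Real.log (c n)) atTop (nhdsWithin 0 {(0 : ℝ)}ᶜ) := by
      rw [tendsto_nhdsWithin_iff]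
      exact ⟨hl0, hne⟩
    refine (hd.comp hmem).congr (fun n => ?_)
    simp [slope_def_field, Real.exp_zero]
  have key : Tendsto (fun n : ℕ => -(((n : ℝ) * Real.log (c n)) *
      ((Real.exp (Real.log (c n)) - 1) / Real.log (c n)))) atTop (nhds (-(Real.log L * 1))) :=
    (hnl.mul hslope).neg
  rw [mul_one] at key
  refine key.congr' ?_
  filter_upwards [hpos, hne] with n hn hne'
  rw [Real.exp_log hn]
  field_simp
  ring

private lemma lemB (c : ℕ → ℝ) (hc1 : ∀ n, c n < 1) (t : ℝ)
    (h : Tendsto (fun n : ℕ => (n : ℝ) * (1 - c n)) atTop (nhds t)) :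
    Tendsto (fun n : ℕ => c n ^ n) atTop (nhds (Real.exp (-t))) := by
  have hc : Tendsto (fun n : ℕ => c n) atTop (nhds 1) := by
    have h1 : Tendsto (fun n : ℕ => 1 - ((n : ℝ) * (1 - c n)) * (n : ℝ)⁻¹) atTop
        (nhds (1 - t * 0)) := tendsto_const_nhds.sub (h.mul tendsto_inv_atTop_nhds_zero_nat)
    rw [mul_zero, sub_zero] at h1
    refine h1.congr' ?_
    filter_upwards [eventually_ge_atTop 1] with n hn
    have : (n : ℝ) ≠ 0 := by positivity
    field_simp
    ring
  have hpos : ∀ᶠ n : ℕ in atTop, 0 < c n :=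
    hc.eventually (eventually_gt_nhds one_half_lt_one) |>.mono fun n hn => by linarith
  have hd : Tendsto (slope Real.log 1) (nhdsWithin 1 {(1 : ℝ)}ᶜ) (nhds 1) := by
    have h3 := Real.hasDerivAt_log (one_ne_zero)
    rw [hasDerivAt_iff_tendsto_slope] at h3
    simpa using h3
  have hmem : Tendsto (fun n : ℕ => c n) atTop (nhdsWithin 1 {(1 : ℝ)}ᶜ) := by
    rw [tendsto_nhdsWithin_iff]
    exact ⟨hc, Eventually.of_forall fun n => ne_of_lt (hc1 n)⟩
  have hslope : Tendsto (fun n : ℕ => Real.log (c n) / (c n - 1)) atTop (nhds 1) := by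
    refine (hd.comp hmem).congr (fun n => ?_)
    simp [slope_def_field, Real.log_one]
  have hnl : Tendsto (fun n : ℕ => (n : ℝ) * Real.log (c n)) atTop (nhds (-t)) := by
    have key : Tendsto (fun n : ℕ => (-((n : ℝ) * (1 - c n))) * (Real.log (c n) / (c n - 1)))
        atTop (nhds (-t * 1)) := h.neg.mul hslope
    rw [mul_one] at key
    refine key.congr (fun n => ?_)
    have hne : c n - 1 ≠ 0 := sub_ne_zero.mpr (ne_of_lt (hc1 n))
    field_simp
    ring
  have final := (Real.continuous_exp.tendsto _).comp hnl
  refine final.congr' ?_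
  filter_upwards [hpos] with n hn
  simp only [Function.comp]
  rw [Real.exp_nat_mul, Real.exp_log hn]

/-- Property 1 (simplification by tail equivalence): if `F` and `G` are right-continuous
nondecreasing functions with values in `[0,1]`, everywhere `< 1`, right tail equivalent
(`(1 - G(x))/(1 - F(x)) → 1` as `x → ∞`), and if `F(a_n x + b_n)^n → Λ(x)` for
norming constants with `a_n > 0`, `b_n → ∞` and `a_n/b_n → 0`, then also
`G(a_n x + b_n)^n → Λ(x)` for every `x`. -/
theorem stmt_15 (F G : ℝ → ℝ)
    (hF01 : ∀ x, F x ∈ Set.Icc (0 : ℝ) 1) (hG01 : ∀ x, G x ∈ Set.Icc (0 : ℝ) 1)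
    (hFmono : Monotone F) (hGmono : Monotone G)
    (hFrc : ∀ x : ℝ, ContinuousWithinAt F (Set.Ici x) x)
    (hGrc : ∀ x : ℝ, ContinuousWithinAt G (Set.Ici x) x)
    (hFlt : ∀ x, F x < 1) (hGlt : ∀ x, G x < 1)
    (htail : Tendsto (fun x : ℝ => (1 - G x) / (1 - F x)) atTop (nhds 1))
    (a b : ℕ → ℝ) (ha : ∀ n, 0 < a n) (hbtop : Tendsto b atTop atTop)
    (hconv : ∀ x : ℝ,
      Tendsto (fun n : ℕ => F (a n * x + b n) ^ n) atTop
        (nhds (Real.exp (-Real.exp (-x)))))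
    (hab : Tendsto (fun n => a n / b n) atTop (nhds 0)) :
    ∀ x : ℝ,
      Tendsto (fun n : ℕ => G (a n * x + b n) ^ n) atTop
        (nhds (Real.exp (-Real.exp (-x)))) := by
  intro x
  set u : ℕ → ℝ := fun n => a n * x + b n with hu_def
  -- u n → ∞
  have hu : Tendsto u atTop atTop := by
    have hsm : Tendsto (fun n => a n / b n * x) atTop (nhds 0) := by
      simpa using hab.mul_const x
    have hsm2 : ∀ᶠ n in atTop, |a n / b n * x| < 1 / 2 :=
      by simpa using hsm.eventually (eventually_abs_sub_lt (0 : ℝ) (by norm_num : (0:ℝ) < 1/2))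
    have hb2 : Tendsto (fun n => b n / 2) atTop atTop :=
      hbtop.atTop_div_const (by norm_num)
    refine tendsto_atTop_mono' atTop ?_ hb2
    filter_upwards [hsm2, hbtop.eventually_gt_atTop 0] with n hn hbn
    have hbne : b n ≠ 0 := ne_of_gt hbn
    have hax : a n * x = (a n / b n * x) * b n := by field_simp
    have habs : |a n * x| ≤ b n / 2 := by
      rw [hax, abs_mul, abs_of_pos hbn]
      nlinarith [abs_nonneg (a n / b n * x)]
    have : -(b n / 2) ≤ a n * x := by
      have := neg_abs_le (a n * x); linarith
    simp only [u]
    linarith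
  -- n (1 - F (u n)) → exp (-x)
  have hF : Tendsto (fun n : ℕ => (n : ℝ) * (1 - F (u n))) atTop (nhds (Real.exp (-x))) := by
    have := lemA (fun n => F (u n)) (fun n => (hF01 (u n)).1) (fun n => hFlt (u n))
      (Real.exp (-Real.exp (-x))) (Real.exp_pos _) (hconv x)
    simpa [Real.log_exp] using this
  -- ratio → 1
  have hratio : Tendsto (fun n : ℕ => (1 - G (u n)) / (1 - F (u n))) atTop (nhds 1) :=
    htail.comp hu
  -- n (1 - G (u n)) → exp (-x)
  have hG : Tendsto (fun n : ℕ => (n : ℝ) * (1 - G (u n))) atTop (nhds (Real.exp (-x))) := by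
    have key : Tendsto (fun n : ℕ => ((1 - G (u n)) / (1 - F (u n))) * ((n : ℝ) * (1 - F (u n))))
        atTop (nhds (1 * Real.exp (-x))) := hratio.mul hF
    rw [one_mul] at key
    refine key.congr (fun n => ?_)
    have hne : 1 - F (u n) ≠ 0 := ne_of_gt (by linarith [hFlt (u n)])
    field_simp
  exact lemB (fun n => G (u n)) (fun n => hGlt (u n)) (Real.exp (-x)) hG
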